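/- For all positive integers t and all nonnegative integers n, p_{10t,5t}(5n + 4) ≡ 0 (mod 5). -/

import Mathlib

open PowerSeries Finset

/-- The ordinary partition function `p`, extended by zero to negative integers. -/
noncomputable def pInt (m : ℤ) : ℤ :=
  if 0 ≤ m then (Fintype.card (Nat.Partition m.toNat) : ℤ) else 0

/-- `(q^t; q^t)_∞ = ∏_{j ≥ 1} (1 - q^{t j})` as a formal power series over ℤ
(the `n`-th coefficient only depends on the factors with `t(j+1) ≤ n`, so the
truncated finite product gives the correct coefficient). -/
noncomputable def euler (t : ℕ) : PowerSeries ℤ :=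
  PowerSeries.mk fun n =>
    PowerSeries.coeff (R := ℤ) n
      (∏ j ∈ Finset.range (n + 1), (1 - (PowerSeries.X : PowerSeries ℤ) ^ (t * (j + 1))))

/-- `Σ_{k ≥ 0} (-1)^k q^{t k (k+1)/2}` as a formal power series over ℤ. -/
noncomputable def theta (t : ℕ) : PowerSeries ℤ :=
  PowerSeries.mk fun m =>
    ∑ k ∈ Finset.range (m + 1), if 2 * m = t * k * (k + 1) then (-1 : ℤ) ^ k else 0

/-- `Σ_{k ≥ 0} (-1)^k q^{t k^2}` as a formal power series over ℤ. -/
noncomputable def thetaSq (t : ℕ) : PowerSeries ℤ :=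
  PowerSeries.mk fun m =>
    ∑ k ∈ Finset.range (m + 1), if m = t * k ^ 2 then (-1 : ℤ) ^ k else 0

/-- `(-q^a; q^k)_∞ = ∏_{j ≥ 0} (1 + q^{a + k j})` as a formal power series over ℤ. -/
noncomputable def aqk (a k : ℕ) : PowerSeries ℤ :=
  PowerSeries.mk fun n =>
    PowerSeries.coeff (R := ℤ) n
      (∏ j ∈ Finset.range (n + 1), (1 + (PowerSeries.X : PowerSeries ℤ) ^ (a + k * j)))

/-- Extension of a function on ℕ by zero to ℤ. -/
noncomputable def extZ (f : ℕ → ℤ) : ℤ → ℤ := fun m => if 0 ≤ m then f m.toNat else 0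

namespace S7
abbrev A := PowerSeries ℤ

noncomputable def pp (n : ℕ) : A := ∏ j ∈ Finset.range n, (1 - (X : A) ^ (j+1))

lemma pp_succ (n : ℕ) : pp (n+1) = pp n * (1 - (X:A)^(n+1)) := Finset.prod_range_succ _ _

lemma pp_zero : pp 0 = 1 := Finset.prod_range_zero _

noncomputable def qb : ℕ → ℕ → A
  | 0, 0 => 1
  | 0, _+1 => 0
  | _+1, 0 => 1
  | m+1, k+1 => qb m (k+1) + (X:A)^(m-k) * qb m k

lemma qb_zero_right : ∀ m, qb m 0 = 1
  | 0 => rfl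
  | _+1 => rfl

lemma qb_succ (m k : ℕ) : qb (m+1) (k+1) = qb m (k+1) + (X:A)^(m-k) * qb m k := rfl

lemma qb_eq_zero : ∀ {m k}, m < k → qb m k = 0
  | 0, _+1, _ => rfl
  | m+1, k+1, h => by
    rw [qb_succ, qb_eq_zero (by omega), qb_eq_zero (m := m) (by omega), mul_zero, add_zero]

lemma qb_diag : ∀ m, qb m m = 1
  | 0 => rfl
  | m+1 => by
    rw [qb_succ, qb_eq_zero (by omega), Nat.sub_self, pow_zero, one_mul, qb_diag m, zero_add]

lemma qb_pascalB : ∀ m k, qb (m+1) (k+1) = (X:A)^(k+1) * qb m (k+1) + qb m k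
  | 0, 0 => by simp [qb_succ, qb_zero_right, qb_eq_zero (by omega : 0 < 1)]
  | 0, k+1 => by
    rw [qb_succ, qb_eq_zero (by omega : 0 < k+2), qb_eq_zero (by omega : 0 < k+1)]
    ring
  | m+1, 0 => by
    have h1 : qb (m+2) 1 = qb (m+1) 1 + (X:A)^(m+1) := by
      rw [qb_succ, qb_zero_right, Nat.sub_zero, mul_one]
    have h2 := qb_pascalB m 0
    have h3 : qb (m+1) 1 = qb m 1 + (X:A)^m := by
      rw [qb_succ, qb_zero_right, Nat.sub_zero, mul_one]
    rw [qb_zero_right] at h2 ⊢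
    rw [h1]
    linear_combination h2 - (X:A) * h3
  | m+1, k+1 => by
    have d1 : qb (m+2) (k+2) = qb (m+1) (k+2) + (X:A)^(m+1-(k+1)) * qb (m+1) (k+1) := qb_succ _ _
    have hsub : m + 1 - (k+1) = m - k := by omega
    rw [hsub] at d1
    rcases le_or_gt (k+1) m with h | h
    · obtain ⟨a, ha⟩ : ∃ a, m - k = a + 1 := ⟨m - k - 1, by omega⟩
      have b1 := qb_pascalB m (k+1)
      have b2 := qb_pascalB m k
      have d2 : qb (m+1) (k+2) = qb m (k+2) + (X:A)^a * qb m (k+1) := by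
        rw [qb_succ]; congr 3; omega
      have d3 : qb (m+1) (k+1) = qb m (k+1) + (X:A)^(a+1) * qb m k := by
        rw [qb_succ, ← ha]
      rw [d1, ha]
      linear_combination b1 - (X:A)^(k+2)*d2 + (X:A)^(a+1)*b2 - d3
    · rw [d1, qb_eq_zero (by omega : m+1 < k+2)]
      rcases Nat.lt_or_ge m k with h2 | h2
      · rw [qb_eq_zero (by omega : m+1 < k+1)]; ring
      · have : m = k := by omega
        subst this
        rw [qb_diag, Nat.sub_self]; ring

lemma qb_pp : ∀ m k, k ≤ m → qb m k * pp k * pp (m - k) = pp m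
  | 0, 0, _ => by simp [qb_zero_right, pp]
  | m+1, 0, _ => by simp [qb_zero_right, pp]
  | m+1, k+1, h => by
    rcases Nat.eq_or_lt_of_le h with h1 | h1
    · rw [← h1, qb_diag, Nat.sub_self]
      simp [pp]
    · have hk : k + 1 ≤ m := by omega
      have hk2 : k ≤ m := by omega
      obtain ⟨a, ha⟩ : ∃ a, m - k = a + 1 := ⟨m - k - 1, by omega⟩
      have i1 : qb m (k+1) * pp (k+1) * pp a = pp m := by
        have := qb_pp m (k+1) hk
        rwa [show m - (k+1) = a by omega] at this
      have i2' : qb m k * pp k * pp (a+1) = pp m := by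
        have := qb_pp m k hk2
        rwa [ha] at this
      have hpp : pp (a+1) = pp a * (1 - (X:A)^(a+1)) := pp_succ a
      have hpk : pp (k+1) = pp k * (1 - (X:A)^(k+1)) := pp_succ k
      have hppm : pp (m+1) = pp m * (1 - (X:A)^(m+1)) := pp_succ m
      have hexp : (X:A)^(a+1) * (X:A)^(k+1) = (X:A)^(m+1) := by
        rw [← pow_add]; congr 1; omega
      have hgoal : m + 1 - (k+1) = a + 1 := by omega
      rw [qb_succ, hgoal, show m - k = a + 1 from ha]
      linear_combination (1 - (X:A)^(a+1)) * i1 + qb m (k+1) * pp (k+1) * hpp +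
        (X:A)^(a+1)*(1 - (X:A)^(k+1)) * i2' + (X:A)^(a+1) * qb m k * pp (a+1) * hpk
        - hppm - pp m * hexp

lemma coeff_X_pow_mul_eq_zero {j e : ℕ} (g : A) (h : j < e) :
    PowerSeries.coeff (R := ℤ) j ((X:A)^e * g) = 0 := by
  rw [mul_comm, PowerSeries.coeff_mul_X_pow']
  simp [Nat.not_le.mpr h]

lemma coeff_qb_A {j m k : ℕ} (h : j + k ≤ m) :
    PowerSeries.coeff (R := ℤ) j (qb (m+1) k) = PowerSeries.coeff (R := ℤ) j (qb m k) := by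
  cases k with
  | zero => rw [qb_zero_right, qb_zero_right]
  | succ k' =>
    rw [qb_succ, map_add, coeff_X_pow_mul_eq_zero _ (by omega : j < m - k'), add_zero]

lemma coeff_qb_A' {j m k : ℕ} (s : ℕ) (h : j + k ≤ m) :
    PowerSeries.coeff (R := ℤ) j (qb (m+s) k) = PowerSeries.coeff (R := ℤ) j (qb m k) := by
  induction s with
  | zero => rfl
  | succ s ih =>
    rw [show m + (s+1) = (m+s) + 1 by omega, coeff_qb_A (by omega), ih]

lemma coeff_qb_P {j m k : ℕ} (h : j ≤ k) :
    PowerSeries.coeff (R := ℤ) j (qb (m+1) (k+1)) = PowerSeries.coeff (R := ℤ) j (qb m k) := by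
  rw [qb_pascalB, map_add, coeff_X_pow_mul_eq_zero _ (by omega : j < k+1), zero_add]

lemma coeff_qb_P' {j m k : ℕ} (s : ℕ) (h : j ≤ k) :
    PowerSeries.coeff (R := ℤ) j (qb (m+s) (k+s)) = PowerSeries.coeff (R := ℤ) j (qb m k) := by
  induction s with
  | zero => rfl
  | succ s ih =>
    rw [show m + (s+1) = (m+s) + 1 by omega, show k + (s+1) = (k+s) + 1 by omega,
      coeff_qb_P (by omega), ih]

noncomputable def gq (j : ℕ) : ℤ := PowerSeries.coeff (R := ℤ) j (qb (2*(j+1)) (j+1))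

lemma stab {j m k : ℕ} (h1 : j < k) (h2 : k + j < m) :
    PowerSeries.coeff (R := ℤ) j (qb m k) = gq j := by
  have hp : PowerSeries.coeff (R := ℤ) j (qb (j+1+k) k) = gq j := by
    have := coeff_qb_P' (j := j) (m := 2*(j+1)) (k := j+1) (k - (j+1)) (by omega)
    rw [show 2*(j+1) + (k - (j+1)) = j+1+k by omega, show j+1 + (k - (j+1)) = k by omega] at this
    exact this
  have := coeff_qb_A' (j := j) (m := j+1+k) (k := k) (m - (j+1+k)) (by omega)
  rw [show j+1+k + (m - (j+1+k)) = m by omega] at this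
  rw [this, hp]

lemma coeff_pp_succ {j m : ℕ} (h : j ≤ m) :
    PowerSeries.coeff (R := ℤ) j (pp (m+1)) = PowerSeries.coeff (R := ℤ) j (pp m) := by
  rw [pp_succ, mul_sub, mul_one, map_sub, PowerSeries.coeff_mul_X_pow']
  simp [Nat.not_le.mpr (by omega : j < m+1)]

lemma coeff_pp {j m n : ℕ} (hm : j ≤ m) (hn : j ≤ n) :
    PowerSeries.coeff (R := ℤ) j (pp m) = PowerSeries.coeff (R := ℤ) j (pp n) := by
  suffices H : ∀ m, j ≤ m → PowerSeries.coeff (R := ℤ) j (pp m) = PowerSeries.coeff (R := ℤ) j (pp j) by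
    rw [H m hm, H n hn]
  intro m
  induction m with
  | zero => intro h; simp_all
  | succ m ih =>
    intro h
    rcases Nat.eq_or_lt_of_le h with h1 | h1
    · rw [h1]
    · rw [coeff_pp_succ (by omega), ih (by omega)]

def sgz (k : ℤ) : ℤ := if Even k then 1 else -1

lemma sgz_add_one (k : ℤ) : sgz (k+1) = - sgz k := by
  by_cases h : Even k
  · simp [sgz, h, Int.even_add_one]
  · simp [sgz, h, Int.even_add_one]

lemma sgz_congr {a b : ℤ} (h : Even (a - b)) : sgz a = sgz b := by
  unfold sgz
  rw [Int.even_sub] at h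
  by_cases hb : Even b
  · simp [hb, h.mpr hb]
  · have : ¬ Even a := fun ha => hb (h.mp ha)
    simp [hb, this]

def ee (k : ℤ) : ℕ := (k*(k+1)/2).toNat

lemma ee_int (k : ℤ) : (ee k : ℤ) = k*(k+1)/2 := by
  have h : 0 ≤ k*(k+1) := by
    rcases le_or_gt 0 k with h | h
    · exact mul_nonneg h (by omega)
    · have := mul_nonneg (a := -k) (b := -(k+1)) (by omega) (by omega)
      nlinarith
  exact Int.toNat_of_nonneg (Int.ediv_nonneg h (by norm_num))

lemma ee_succ (k : ℤ) : (ee (k+1) : ℤ) = (ee k : ℤ) + (k+1) := by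
  rw [ee_int, ee_int]
  obtain ⟨a, ha⟩ := Int.even_mul_succ_self k
  have hb : (k+1)*((k+1)+1) = k*(k+1) + 2*(k+1) := by ring
  generalize hq : (k+1)*((k+1)+1) = q at hb ⊢
  generalize hp : k*(k+1) = p at ha hb ⊢
  omega

noncomputable def c : ℕ → ℤ → A
  | 0, i => if i = 0 then 1 else 0
  | n+1, i => c n (i-1) - (X:A)^n * c n i - (X:A)^(n+1) * c n (i-2) + (X:A)^(2*n+1) * c n (i-1)

lemma c_succ (n : ℕ) (i : ℤ) : c (n+1) i =
    c n (i-1) - (X:A)^n * c n i - (X:A)^(n+1) * c n (i-2) + (X:A)^(2*n+1) * c n (i-1) := rfl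

lemma c_neg (n : ℕ) : ∀ (i : ℤ), i < 0 → c n i = 0 := by
  induction n with
  | zero =>
    intro i h
    have : ¬ (i = 0) := by omega
    simp [c, this]
  | succ n ih =>
    intro i h
    rw [c_succ, ih (i-1) (by omega), ih i (by omega), ih (i-2) (by omega)]
    ring

lemma c_big (n : ℕ) : ∀ (i : ℤ), 2*n < i → c n i = 0 := by
  induction n with
  | zero =>
    intro i h
    have : ¬ (i = 0) := by omega
    simp [c, this]
  | succ n ih =>
    intro i h
    rw [c_succ, ih (i-1) (by push_cast; omega), ih i (by push_cast; omega),
      ih (i-2) (by push_cast; omega)]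
    ring

lemma qb_step (n j : ℕ) : qb (2*n+2) (j+2) =
    (1 + (X:A)^(2*n+1)) * qb (2*n) (j+1) + (X:A)^(j+2) * qb (2*n) (j+2)
      + (X:A)^(2*n-j) * qb (2*n) j := by
  rcases le_or_gt j (2*n) with h | h
  · have d1 : qb (2*n+2) (j+2) = qb (2*n+1) (j+2) + (X:A)^(2*n-j) * qb (2*n+1) (j+1) := by
      have := qb_succ (2*n+1) (j+1)
      rwa [show 2*n+1-(j+1) = 2*n-j by omega] at this
    have b1 : qb (2*n+1) (j+2) = (X:A)^(j+2) * qb (2*n) (j+2) + qb (2*n) (j+1) := qb_pascalB _ _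
    have b2 : qb (2*n+1) (j+1) = (X:A)^(j+1) * qb (2*n) (j+1) + qb (2*n) j := qb_pascalB _ _
    have hexp : (X:A)^(2*n-j) * (X:A)^(j+1) = (X:A)^(2*n+1) := by
      rw [← pow_add]; congr 1; omega
    linear_combination d1 + b1 + (X:A)^(2*n-j) * b2 + qb (2*n) (j+1) * hexp
  · rw [qb_eq_zero (by omega : 2*n+2 < j+2), qb_eq_zero (by omega : 2*n < j+1),
      qb_eq_zero (by omega : 2*n < j+2), qb_eq_zero (by omega : 2*n < j)]
    ring

lemma qb_step1 (n : ℕ) : qb (2*n+2) 1 = (1 + (X:A)^(2*n+1)) * qb (2*n) 0 + (X:A) * qb (2*n) 1 := by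
  have d : qb (2*n+2) 1 = qb (2*n+1) 1 + (X:A)^(2*n+1) * qb (2*n+1) 0 := by
    have := qb_succ (2*n+1) 0
    rwa [show 2*n+1-0 = 2*n+1 by omega] at this
  have b : qb (2*n+1) 1 = (X:A)^1 * qb (2*n) 1 + qb (2*n) 0 := qb_pascalB _ _
  rw [qb_zero_right] at *
  rw [d, b]
  ring

lemma ccf (n : ℕ) : ∀ i : ℤ, c n i =
    if 0 ≤ i then PowerSeries.C (R := ℤ) (sgz (i+n)) * qb (2*n) i.toNat * (X:A)^(ee (i-n)) else 0 := by
  induction n with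
  | zero =>
    intro i
    rcases lt_trichotomy i 0 with h | h | h
    · have h1 : ¬ (i = 0) := by omega
      have h2 : ¬ (0 ≤ i) := by omega
      simp [c, h1, h2]
    · subst h
      simp [c, sgz, ee, qb_zero_right]
    · have h1 : ¬ (i = 0) := by omega
      have h2 : (0:ℤ) ≤ i := by omega
      have h3 : qb 0 i.toNat = 0 := qb_eq_zero (by omega)
      simp [c, h1, h2, h3]
  | succ n ih =>
    intro i
    rw [c_succ, ih (i-1), ih i, ih (i-2)]
    rcases lt_trichotomy i 0 with h | h | h
    · have h1 : ¬ ((0:ℤ) ≤ i - 1) := by omega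
      have h2 : ¬ ((0:ℤ) ≤ i) := by omega
      have h3 : ¬ ((0:ℤ) ≤ i - 2) := by omega
      simp only [h1, h2, h3, if_false, if_neg]
      ring
    · subst h
      have h1 : ¬ ((0:ℤ) ≤ 0 - 1) := by omega
      have h3 : ¬ ((0:ℤ) ≤ 0 - 2) := by omega
      have h2 : (0:ℤ) ≤ 0 := le_refl 0
      simp only [h1, h2, h3, if_false, if_true, if_neg, if_pos]
      have hs : sgz (0 + ((n:ℤ)+1)) = - sgz (0 + (n:ℤ)) := by
        rw [show (0 + ((n:ℤ)+1)) = (0 + (n:ℤ)) + 1 by ring, sgz_add_one]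
      have he : (X:A)^(n) * (X:A)^(ee (0 - (n:ℤ))) = (X:A)^(ee (0 - ((n:ℤ)+1))) := by
        rw [← pow_add]
        congr 1
        have u1 := ee_succ (0 - ((n:ℤ)+1))
        have u2 : (0 - ((n:ℤ)+1)) + 1 = 0 - (n:ℤ) := by ring
        rw [u2] at u1
        omega
      push_cast
      push_cast at hs he
      rw [hs]
      simp only [Int.toNat_zero, qb_zero_right, map_neg]
      linear_combination (-(PowerSeries.C (R := ℤ) (sgz (0 + (n:ℤ))))) * he
    · -- i ≥ 1
      have h2 : (0:ℤ) ≤ i := by omega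
      have h1' : (0:ℤ) ≤ i - 1 := by omega
      rcases lt_trichotomy i 1 with hh | hh | hh
      · omega
      · -- i = 1
        subst hh
        have h3 : ¬ ((0:ℤ) ≤ 1 - 2) := by omega
        simp only [h2, h1', h3, if_true, if_false, if_pos, if_neg]
        norm_num
        have hq : qb (2*n+2) 1 = (1 + (X:A)^(2*n+1)) * qb (2*n) 0 + (X:A) * qb (2*n) 1 :=
          qb_step1 n
        have hs1 : sgz (1 + ((n:ℤ)+1)) = sgz ((n:ℤ)) := by
          apply sgz_congr; rw [show 1 + ((n:ℤ)+1) - n = 2 by ring]; decide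
        have hs2 : sgz (1 + (n:ℤ)) = - sgz ((n:ℤ)) := by
          rw [show 1 + (n:ℤ) = (n:ℤ) + 1 by ring, sgz_add_one]
        have he : (X:A)^n * (X:A)^(ee (1 - (n:ℤ))) = (X:A)^(ee (1 - ((n:ℤ)+1))) * (X:A)^1 := by
          rw [← pow_add, ← pow_add]
          congr 1
          have u1 := ee_succ (1 - ((n:ℤ)+1))
          have u2 : (1 - ((n:ℤ)+1)) + 1 = 1 - (n:ℤ) := by ring
          rw [u2] at u1
          omega
        have he2 : ee (1 - 1 - (n:ℤ)) = ee (0 - (n:ℤ)) := by norm_num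
        rw [hs1, hs2, Int.cast_neg, show 2*(n+1) = 2*n+2 by ring, hq]
        have he' : (X:A)^n * (X:A)^(ee (1 - (n:ℤ))) = (X:A)^(ee (-(n:ℤ))) * (X:A)^1 := by
          have u1 := ee_succ (-(n:ℤ))
          rw [show -(n:ℤ)+1 = 1 - (n:ℤ) by ring] at u1
          rw [← pow_add, ← pow_add]
          congr 1
          omega
        linear_combination ((sgz (n:ℤ) : ℤ) : A) * qb (2*n) 1 * he'
      · -- i ≥ 2
        obtain ⟨m, rfl⟩ : ∃ m:ℕ, i = (m:ℤ)+2 := ⟨(i-2).toNat, by omega⟩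
        have h3 : (0:ℤ) ≤ (m:ℤ)+2-2 := by omega
        simp only [h2, h1', h3, if_pos]
        have t0 : ((m:ℤ)+2).toNat = m+2 := by omega
        have t1 : ((m:ℤ)+2-1).toNat = m+1 := by omega
        have t2 : ((m:ℤ)+2-2).toNat = m := by omega
        have hsn := sgz_add_one ((m:ℤ)+n)
        have a1 : sgz ((m:ℤ) + 2 - 1 + n) = sgz ((m:ℤ) + n + 1) := by congr 1; ring
        have a2 : sgz ((m:ℤ) + 2 + n) = - sgz ((m:ℤ) + n + 1) := by
          rw [show (m:ℤ)+2+n = ((m:ℤ)+n+1)+1 by ring, sgz_add_one]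
        have a3 : sgz ((m:ℤ) + 2 - 2 + n) = - sgz ((m:ℤ) + n + 1) := by
          rw [show (m:ℤ)+2-2+n = (m:ℤ)+n by ring]
          omega
        have a4 : sgz ((m:ℤ) + 2 + ((n:ℤ)+1)) = sgz ((m:ℤ) + n + 1) := by
          apply sgz_congr
          rw [show (m:ℤ)+2+((n:ℤ)+1) - ((m:ℤ)+n+1) = 2 by ring]
          decide
        have b1 : ee ((m:ℤ)+2-1-n) = ee ((m:ℤ)+1-n) := by congr 1; ring
        have b4 : ee ((m:ℤ)+2-((n:ℤ)+1)) = ee ((m:ℤ)+1-n) := by congr 1; ring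
        have hcast : ((n:ℕ)+1 : ℕ) = ((n+1 : ℕ)) := rfl
        push_cast
        rw [a1, a2, a3, a4, b1, b4, t0, t1, t2,
          map_neg (PowerSeries.C (R := ℤ)) (sgz ((m:ℤ)+n+1)), show 2*(n+1) = 2*n+2 by ring]
        rcases le_or_gt m (2*n) with hm | hm
        · have hA : (X:A)^n * (X:A)^(ee ((m:ℤ)+2-n)) = (X:A)^(ee ((m:ℤ)+1-n)) * (X:A)^(m+2) := by
            have u := ee_succ ((m:ℤ)+1-n)
            rw [show (m:ℤ)+1-n+1 = (m:ℤ)+2-n by ring] at u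
            rw [← pow_add, ← pow_add]
            congr 1
            omega
          have hB : (X:A)^(n+1) * (X:A)^(ee ((m:ℤ)+2-2-n))
              = (X:A)^(ee ((m:ℤ)+1-n)) * (X:A)^(2*n-m) := by
            have u := ee_succ ((m:ℤ)-n)
            have w : (m:ℤ)-(n:ℤ)+1 = (m:ℤ)+1-n := by ring
            rw [w] at u
            have v : ee ((m:ℤ)+2-2-n) = ee ((m:ℤ)-n) := by congr 1; ring
            rw [v, ← pow_add, ← pow_add]
            congr 1
            omega
          have hq := qb_step n m
          linear_combination (PowerSeries.C (R := ℤ) (sgz ((m:ℤ)+n+1))) * qb (2*n) (m+2) * hA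
            + (PowerSeries.C (R := ℤ) (sgz ((m:ℤ)+n+1))) * qb (2*n) m * hB
            - (PowerSeries.C (R := ℤ) (sgz ((m:ℤ)+n+1))) * (X:A)^(ee ((m:ℤ)+1-n)) * hq
        · rw [qb_eq_zero (by omega : 2*n < m+1), qb_eq_zero (by omega : 2*n < m+2),
            qb_eq_zero (by omega : 2*n < m), qb_eq_zero (by omega : 2*n+2 < m+2)]
          ring

noncomputable def Vv (n : ℕ) : A := ∑ i ∈ Finset.range (2*n+1), c n (i:ℤ)
noncomputable def Ww (n : ℕ) : A := ∑ i ∈ Finset.range (2*n+1), PowerSeries.C (R := ℤ) (i:ℤ) * c n (i:ℤ)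

lemma sum_c_shift0 (n : ℕ) (m : ℕ) (hm : 2*n+1 ≤ m) :
    ∑ i ∈ Finset.range m, c n (i:ℤ) = Vv n := by
  rw [Vv, ← Finset.sum_subset (Finset.range_subset_range.mpr hm)]
  intro x _ hx
  rw [Finset.mem_range] at hx
  exact c_big n _ (by omega)

lemma sum_c_shift (n : ℕ) (m : ℕ) (d : ℕ) (hm : 2*n+1+d ≤ m) :
    ∑ i ∈ Finset.range m, c n ((i:ℤ) - d) = Vv n := by
  induction d generalizing m with
  | zero =>
    simp only [Nat.cast_zero, sub_zero]
    exact sum_c_shift0 n m (by omega)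
  | succ d ih =>
    obtain ⟨m', rfl⟩ : ∃ m', m = m' + 1 := ⟨m - 1, by omega⟩
    rw [Finset.sum_range_succ' (fun i => c n ((i:ℤ) - (d+1:ℕ)))]
    have h0 : c n ((0:ℕ) - ((d+1:ℕ):ℤ)) = 0 := c_neg n _ (by push_cast; omega)
    rw [h0, add_zero]
    have : ∀ i : ℕ, c n (((i+1:ℕ):ℤ) - ((d+1:ℕ):ℤ)) = c n ((i:ℤ) - d) := by
      intro i; congr 1; push_cast; ring
    rw [Finset.sum_congr rfl (fun i _ => this i)]
    exact ih m' (by omega)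

lemma sum_wc_shift (n : ℕ) (m : ℕ) (d : ℕ) (hm : 2*n+1+d ≤ m) :
    ∑ i ∈ Finset.range m, PowerSeries.C (R := ℤ) (i:ℤ) * c n ((i:ℤ) - d) =
      Ww n + PowerSeries.C (R := ℤ) (d:ℤ) * Vv n := by
  induction d generalizing m with
  | zero =>
    simp only [Nat.cast_zero, sub_zero, map_zero, zero_mul, add_zero]
    rw [Ww, ← Finset.sum_subset (Finset.range_subset_range.mpr (by omega : 2*n+1 ≤ m))]
    intro x _ hx
    rw [Finset.mem_range] at hx
    rw [c_big n _ (by omega), mul_zero]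
  | succ d ih =>
    obtain ⟨m', rfl⟩ : ∃ m', m = m' + 1 := ⟨m - 1, by omega⟩
    rw [Finset.sum_range_succ' (fun i => PowerSeries.C (R := ℤ) (i:ℤ) * c n ((i:ℤ) - (d+1:ℕ)))]
    have h0 : c n ((0:ℕ) - ((d+1:ℕ):ℤ)) = 0 := c_neg n _ (by push_cast; omega)
    rw [h0, mul_zero, add_zero]
    have : ∀ i : ℕ, PowerSeries.C (R := ℤ) ((i+1:ℕ):ℤ) * c n (((i+1:ℕ):ℤ) - ((d+1:ℕ):ℤ)) =
        PowerSeries.C (R := ℤ) ((i:ℤ)) * c n ((i:ℤ) - d) + c n ((i:ℤ) - d) := by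
      intro i
      have harg : ((i+1:ℕ):ℤ) - ((d+1:ℕ):ℤ) = (i:ℤ) - d := by push_cast; ring
      rw [harg]
      have : PowerSeries.C (R := ℤ) ((i+1:ℕ):ℤ) = PowerSeries.C (R := ℤ) (i:ℤ) + 1 := by
        push_cast [map_add]; simp
      rw [this]; ring
    rw [Finset.sum_congr rfl (fun i _ => this i), Finset.sum_add_distrib]
    rw [ih m' (by omega), sum_c_shift n m' d (by omega)]
    push_cast [map_add, map_one]
    ring

lemma V_succ (n : ℕ) : Vv (n+1) = (1 - (X:A)^n) * (1 - (X:A)^(n+1)) * Vv n := by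
  have expand : Vv (n+1) = ∑ i ∈ Finset.range (2*n+3),
      (c n ((i:ℤ)-1) - (X:A)^n * c n (i:ℤ) - (X:A)^(n+1) * c n ((i:ℤ)-2)
        + (X:A)^(2*n+1) * c n ((i:ℤ)-1)) := by
    rw [Vv, show 2*(n+1)+1 = 2*n+3 by ring]
    exact Finset.sum_congr rfl (fun i _ => c_succ n i)
  rw [expand]
  simp only [Finset.sum_add_distrib, Finset.sum_sub_distrib, ← Finset.mul_sum]
  have s1 : ∑ i ∈ Finset.range (2*n+3), c n ((i:ℤ)-1) = Vv n := by
    have := sum_c_shift n (2*n+3) 1 (by omega)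
    simpa using this
  have s0 : ∑ i ∈ Finset.range (2*n+3), c n (i:ℤ) = Vv n := sum_c_shift0 n _ (by omega)
  have s2 : ∑ i ∈ Finset.range (2*n+3), c n ((i:ℤ)-2) = Vv n := by
    have := sum_c_shift n (2*n+3) 2 (by omega)
    simpa using this
  rw [s1, s0, s2]
  ring

lemma W_succ (n : ℕ) : Ww (n+1) = (1 - (X:A)^n) * (1 - (X:A)^(n+1)) * Ww n
    + (1 + (X:A)^(2*n+1) - 2 * (X:A)^(n+1)) * Vv n := by
  have expand : Ww (n+1) = ∑ i ∈ Finset.range (2*n+3),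
      (PowerSeries.C (R := ℤ) (i:ℤ) * c n ((i:ℤ)-1) - (X:A)^n * (PowerSeries.C (R := ℤ) (i:ℤ) * c n (i:ℤ))
        - (X:A)^(n+1) * (PowerSeries.C (R := ℤ) (i:ℤ) * c n ((i:ℤ)-2))
        + (X:A)^(2*n+1) * (PowerSeries.C (R := ℤ) (i:ℤ) * c n ((i:ℤ)-1))) := by
    rw [Ww, show 2*(n+1)+1 = 2*n+3 by ring]
    refine Finset.sum_congr rfl (fun i _ => ?_)
    rw [c_succ n (i:ℤ)]
    ring
  rw [expand]
  simp only [Finset.sum_add_distrib, Finset.sum_sub_distrib, ← Finset.mul_sum]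
  have t1 : ∑ i ∈ Finset.range (2*n+3), PowerSeries.C (R := ℤ) (i:ℤ) * c n ((i:ℤ)-1)
      = Ww n + Vv n := by
    have := sum_wc_shift n (2*n+3) 1 (by omega)
    simpa using this
  have t0 : ∑ i ∈ Finset.range (2*n+3), PowerSeries.C (R := ℤ) (i:ℤ) * c n (i:ℤ) = Ww n := by
    have := sum_wc_shift n (2*n+3) 0 (by omega)
    simpa using this
  have t2 : ∑ i ∈ Finset.range (2*n+3), PowerSeries.C (R := ℤ) (i:ℤ) * c n ((i:ℤ)-2)
      = Ww n + 2 * Vv n := by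
    have := sum_wc_shift n (2*n+3) 2 (by omega)
    have h22 : ((2:ℕ):ℤ) = 2 := by norm_num
    rw [h22] at this
    rw [this, show (PowerSeries.C (R := ℤ)) (2:ℤ) = 2 from by simp [map_ofNat]]
  rw [t1, t0, t2]
  ring

lemma V_zero : Vv 0 = 1 := by simp [Vv, c]

lemma V_one_le (n : ℕ) (h : 1 ≤ n) : Vv n = 0 := by
  induction n with
  | zero => omega
  | succ n ih =>
    rw [V_succ]
    rcases Nat.eq_or_lt_of_le h with h1 | h1
    · have : n = 0 := by omega
      subst this
      simp
    · rw [ih (by omega)]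
      ring

lemma W_form (n : ℕ) : Ww (n+1) = pp n * pp (n+1) := by
  induction n with
  | zero =>
    rw [W_succ, V_zero]
    have : Ww 0 = 0 := by simp [Ww, c]
    rw [this, pp_zero, pp_succ 0, pp_zero]
    ring
  | succ n ih =>
    rw [W_succ, ih, V_one_le (n+1) (by omega), pp_succ (n+1), pp_succ n]
    ring

lemma W_form_sum (n : ℕ) :
    (∑ i ∈ Finset.range (2*(n+1)+1), PowerSeries.C (R := ℤ) (i:ℤ) * c (n+1) (i:ℤ))
      = pp n * pp (n+1) := W_form n

def tN (k : ℕ) : ℕ := k*(k+1)/2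

lemma two_tN (k : ℕ) : 2 * tN k = k*(k+1) := by
  obtain ⟨a, ha⟩ := Nat.even_mul_succ_self k
  unfold tN
  omega

lemma tN_ge (k : ℕ) : k ≤ tN k := by
  have h := two_tN k
  nlinarith [h, sq_nonneg k]

lemma ee_natCast (k : ℕ) : ee (k:ℤ) = tN k := by
  have h := ee_int (k:ℤ)
  obtain ⟨a, ha⟩ := Nat.even_mul_succ_self k
  have h1 : (k:ℤ)*((k:ℤ)+1) = (a:ℤ)+(a:ℤ) := by
    have := congrArg (fun x : ℕ => (x:ℤ)) ha
    push_cast at this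
    push_cast
    linarith
  rw [h1] at h
  unfold tN
  omega

lemma ee_neg_natCast (k : ℕ) : ee (-1-(k:ℤ)) = tN k := by
  have h := ee_int (-1-(k:ℤ))
  have h1 : (-1-(k:ℤ))*((-1-(k:ℤ))+1) = (k:ℤ)*((k:ℤ)+1) := by ring
  rw [h1] at h
  have h2 := ee_int (k:ℤ)
  have h3 : ee (-1-(k:ℤ)) = ee (k:ℤ) := by omega
  rw [h3, ee_natCast]

lemma sgz_natCast (k : ℕ) : sgz (k:ℤ) = (-1)^k := by
  induction k with
  | zero => simp [sgz]
  | succ k ih =>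
    rw [show ((k+1:ℕ):ℤ) = (k:ℤ)+1 by push_cast; ring, sgz_add_one, ih]
    ring

lemma coeff_c_high (N n k : ℕ) (hn : n = 2*N+2) :
    PowerSeries.coeff (R := ℤ) N (c n ((n:ℤ)+k)) =
      (-1)^k * (if tN k ≤ N then gq (N - tN k) else 0) := by
  rw [ccf n ((n:ℤ)+k), if_pos (by positivity)]
  have hs : sgz ((n:ℤ)+k+n) = (-1)^k := by
    rw [sgz_congr (a := (n:ℤ)+k+n) (b := (k:ℤ)) ⟨(n:ℤ), by ring⟩, sgz_natCast]
  have ht : ((n:ℤ)+k).toNat = n + k := by omega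
  have he : ee ((n:ℤ)+k-n) = tN k := by
    rw [show (n:ℤ)+k-(n:ℤ) = (k:ℤ) by ring, ee_natCast]
  rw [hs, ht, he, PowerSeries.coeff_mul_X_pow']
  by_cases h : tN k ≤ N
  · rw [if_pos h, if_pos h, PowerSeries.coeff_C_mul]
    have hg : PowerSeries.coeff (R := ℤ) (N - tN k) (qb (2*n) (n+k)) = gq (N - tN k) := by
      apply stab
      · omega
      · have := tN_ge k
        omega
    rw [hg]
  · rw [if_neg h, if_neg h, mul_zero]

lemma coeff_c_low (N n k : ℕ) (hn : n = 2*N+2) (hk : k < n) :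
    PowerSeries.coeff (R := ℤ) N (c n ((n:ℤ)-1-k)) =
      (-1)^(k+1) * (if tN k ≤ N then gq (N - tN k) else 0) := by
  rw [ccf n ((n:ℤ)-1-k), if_pos (by omega : (0:ℤ) ≤ (n:ℤ)-1-k)]
  have hs : sgz ((n:ℤ)-1-k+n) = (-1)^(k+1) := by
    rw [sgz_congr (a := (n:ℤ)-1-k+n) (b := ((k+1:ℕ):ℤ)) ⟨(n:ℤ)-1-k, by push_cast; ring⟩,
      sgz_natCast]
  have ht : ((n:ℤ)-1-k).toNat = n - 1 - k := by omega
  have he : ee ((n:ℤ)-1-k-n) = tN k := by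
    rw [show (n:ℤ)-1-k-(n:ℤ) = -1-(k:ℤ) by ring, ee_neg_natCast]
  rw [hs, ht, he, PowerSeries.coeff_mul_X_pow']
  by_cases h : tN k ≤ N
  · rw [if_pos h, if_pos h, PowerSeries.coeff_C_mul]
    have hkN : k ≤ N := le_trans (tN_ge k) h
    have hg : PowerSeries.coeff (R := ℤ) (N - tN k) (qb (2*n) (n-1-k)) = gq (N - tN k) := by
      apply stab
      · omega
      · omega
    rw [hg]
  · rw [if_neg h, if_neg h, mul_zero]

lemma coeff_eul {j m : ℕ} (h : j ≤ m) :
    PowerSeries.coeff (R := ℤ) j (euler 1) = PowerSeries.coeff (R := ℤ) j (pp m) := by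
  have h1 : (∏ i ∈ Finset.range (j+1), (1 - (X:A)^(1*(i+1)))) = pp (j+1) := by
    simp only [one_mul, pp]
  rw [euler, PowerSeries.coeff_mk, h1]
  exact coeff_pp (by omega) h

noncomputable def Jj : A := PowerSeries.mk fun m =>
  ∑ k ∈ Finset.range (m+1), if 2*m = k*(k+1) then (-1:ℤ)^k * (2*k+1) else 0
noncomputable def Gg : A := PowerSeries.mk gq

lemma coeff_mul_congr {R : Type*} [CommRing R] {N : ℕ} {A1 B1 A2 B2 : PowerSeries R}
    (hA : ∀ j ≤ N, PowerSeries.coeff (R := R) j A1 = PowerSeries.coeff (R := R) j A2)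
    (hB : ∀ j ≤ N, PowerSeries.coeff (R := R) j B1 = PowerSeries.coeff (R := R) j B2) :
    PowerSeries.coeff (R := R) N (A1 * B1) = PowerSeries.coeff (R := R) N (A2 * B2) := by
  rw [PowerSeries.coeff_mul, PowerSeries.coeff_mul]
  apply Finset.sum_congr rfl
  intro x hx
  rw [Finset.HasAntidiagonal.mem_antidiagonal] at hx
  rw [hA x.1 (by omega), hB x.2 (by omega)]

lemma key1 (N : ℕ) :
    PowerSeries.coeff (R := ℤ) N ((euler 1) * (euler 1)) = PowerSeries.coeff (R := ℤ) N (Jj * Gg) := by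
  set n : ℕ := 2*N+2 with hn
  have hW := W_form_sum (2*N+1)
  have hL : PowerSeries.coeff (R := ℤ) N ((euler 1)*(euler 1))
      = PowerSeries.coeff (R := ℤ) N (pp (2*N+1) * pp (2*N+2)) :=
    coeff_mul_congr (fun j hj => coeff_eul (by omega)) (fun j hj => coeff_eul (by omega))
  have hn1 : (2*N+1)+1 = n := by omega
  rw [hn1] at hW
  rw [hL, ← hW, map_sum]
  -- abbreviations
  set hh : ℕ → ℤ := fun k => if tN k ≤ N then gq (N - tN k) else 0 with hhh
  have hh_zero : ∀ k, N < k → hh k = 0 := by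
    intro k hk
    have := tN_ge k
    simp only [hhh]
    rw [if_neg (by omega)]
  set f : ℕ → ℤ := fun i => PowerSeries.coeff (R := ℤ) N (PowerSeries.C (R := ℤ) (i:ℤ) * c n (i:ℤ)) with hf
  have hsplit : ∑ i ∈ Finset.range (2*n+1), f i
      = ∑ k ∈ Finset.range n, f (n-1-k) + ∑ k ∈ Finset.range (n+1), f (n+k) := by
    have h1 : ∑ i ∈ Finset.range (2*n+1), f i
        = ∑ i ∈ Finset.Ico 0 n, f i + ∑ i ∈ Finset.Ico n (2*n+1), f i := by
      rw [Finset.sum_Ico_consecutive f (by omega) (by omega), Finset.range_eq_Ico]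
    rw [h1, ← Finset.range_eq_Ico, Finset.sum_Ico_eq_sum_range,
      ← Finset.sum_range_reflect f n, show 2*n+1-n = n+1 by omega]
  have termA : ∀ k ∈ Finset.range (n+1), f (n+k) = ((n:ℤ)+k) * ((-1)^k * hh k) := by
    intro k _
    simp only [hf]
    rw [PowerSeries.coeff_C_mul, show ((n+k:ℕ):ℤ) = (n:ℤ)+k by push_cast; ring,
      coeff_c_high N n k hn]
  have termB : ∀ k ∈ Finset.range n, f (n-1-k) = ((n:ℤ)-1-k) * ((-1)^(k+1) * hh k) := by
    intro k hk
    rw [Finset.mem_range] at hk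
    simp only [hf]
    rw [PowerSeries.coeff_C_mul, show ((n-1-k:ℕ):ℤ) = (n:ℤ)-1-k by omega,
      coeff_c_low N n k hn hk]
  rw [hsplit, Finset.sum_congr rfl termA, Finset.sum_congr rfl termB]
  have truncA : ∑ k ∈ Finset.range (n+1), ((n:ℤ)+k) * ((-1)^k * hh k)
      = ∑ k ∈ Finset.range (N+1), ((n:ℤ)+k) * ((-1)^k * hh k) := by
    rw [← Finset.sum_subset (Finset.range_subset_range.mpr (by omega : N+1 ≤ n+1))]
    intro x _ hx
    rw [Finset.mem_range] at hx
    rw [hh_zero x (by omega)]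
    ring
  have truncB : ∑ k ∈ Finset.range n, ((n:ℤ)-1-k) * ((-1)^(k+1) * hh k)
      = ∑ k ∈ Finset.range (N+1), ((n:ℤ)-1-k) * ((-1)^(k+1) * hh k) := by
    rw [← Finset.sum_subset (Finset.range_subset_range.mpr (by omega : N+1 ≤ n))]
    intro x _ hx
    rw [Finset.mem_range] at hx
    rw [hh_zero x (by omega)]
    ring
  rw [truncA, truncB, ← Finset.sum_add_distrib]
  have combine : ∀ k ∈ Finset.range (N+1),
      ((n:ℤ)-1-k) * ((-1)^(k+1) * hh k) + ((n:ℤ)+k) * ((-1)^k * hh k)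
        = (-1)^k * (2*k+1) * hh k := by
    intro k _
    ring
  rw [Finset.sum_congr rfl combine]
  -- now the RHS
  rw [PowerSeries.coeff_mul, Finset.Nat.sum_antidiagonal_eq_sum_range_succ_mk]
  simp only [Jj, Gg, PowerSeries.coeff_mk]
  have expand : ∀ a ∈ Finset.range (N+1),
      (∑ k ∈ Finset.range (a+1), if 2*a = k*(k+1) then (-1:ℤ)^k * (2*k+1) else 0) * gq (N-a)
      = ∑ k ∈ Finset.range (N+1), (if 2*a = k*(k+1) then (-1:ℤ)^k * (2*k+1) else 0) * gq (N-a) := by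
    intro a ha
    rw [Finset.mem_range] at ha
    rw [Finset.sum_mul]
    rw [← Finset.sum_subset (Finset.range_subset_range.mpr (by omega : a+1 ≤ N+1))]
    intro x _ hx
    rw [Finset.mem_range] at hx
    have : ¬ (2*a = x*(x+1)) := by
      intro habs
      have h1 : (a+1)*(a+2) ≤ x*(x+1) := by
        apply Nat.mul_le_mul <;> omega
      nlinarith
    rw [if_neg this]
    ring
  rw [Finset.sum_congr rfl expand, Finset.sum_comm]
  apply Finset.sum_congr rfl
  intro k _
  by_cases htk : tN k ≤ N
  · rw [Finset.sum_eq_single (tN k)]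
    · rw [if_pos (two_tN k)]
      simp only [hhh]
      rw [if_pos htk]
    · intro b _ hb
      rw [if_neg, zero_mul]
      intro habs
      have := two_tN k
      omega
    · intro habs
      rw [Finset.mem_range] at habs
      omega
  · rw [Finset.sum_eq_zero]
    · simp only [hhh]
      rw [if_neg htk]
      ring
    · intro b hb
      rw [Finset.mem_range] at hb
      rw [if_neg, zero_mul]
      intro habs
      have := two_tN k
      omega

lemma key2 (N : ℕ) :
    PowerSeries.coeff (R := ℤ) N ((euler 1) * ((euler 1) * Gg)) = PowerSeries.coeff (R := ℤ) N (euler 1) := by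
  set n : ℕ := N+1 with hn
  have hq := qb_pp (2*n) n (by omega)
  rw [show 2*n - n = n by omega] at hq
  have hG : ∀ j ≤ N, PowerSeries.coeff (R := ℤ) j Gg = PowerSeries.coeff (R := ℤ) j (qb (2*n) n) := by
    intro j hj
    rw [Gg, PowerSeries.coeff_mk]
    exact (stab (by omega) (by omega)).symm
  have inner : ∀ j ≤ N, PowerSeries.coeff (R := ℤ) j ((euler 1) * Gg)
      = PowerSeries.coeff (R := ℤ) j (pp n * qb (2*n) n) := by
    intro j hj
    exact coeff_mul_congr (fun i hi => coeff_eul (by omega)) (fun i hi => hG i (by omega))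
  have houter : PowerSeries.coeff (R := ℤ) N ((euler 1) * ((euler 1) * Gg))
      = PowerSeries.coeff (R := ℤ) N (pp n * (pp n * qb (2*n) n)) :=
    coeff_mul_congr (fun j hj => coeff_eul (by omega)) inner
  rw [houter, show pp n * (pp n * qb (2*n) n) = qb (2*n) n * pp n * pp n by ring, hq]
  exact (coeff_eul (by omega)).symm

lemma eul_const : PowerSeries.constantCoeff (R := ℤ) (euler 1) = 1 := by
  rw [← PowerSeries.coeff_zero_eq_constantCoeff_apply]
  rw [coeff_eul (le_refl 0), pp]
  simp

lemma identity1 : (euler 1) * (euler 1) = Jj * Gg := PowerSeries.ext key1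

lemma identity2 : (euler 1) * Gg = 1 := by
  have h0 : (euler 1) ≠ 0 := by
    intro h
    have := eul_const
    rw [h, map_zero] at this
    exact one_ne_zero this.symm
  have h : (euler 1) * ((euler 1) * Gg) = (euler 1) * 1 := by
    rw [mul_one]
    exact PowerSeries.ext key2
  exact mul_left_cancel₀ h0 h

lemma Jj_coeff : ∀ m, PowerSeries.coeff (R := ℤ) m Jj =
    ∑ k ∈ Finset.range (m+1), if 2*m = k*(k+1) then (-1:ℤ)^k * (2*k+1) else 0 := by
  intro m
  rw [Jj, PowerSeries.coeff_mk]

abbrev K := ZMod 5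

instance : Fact (Nat.Prime 5) := ⟨by norm_num⟩

instance : CharP (PowerSeries K) 5 :=
  (RingHom.charP_iff (PowerSeries.C (R := K)) (PowerSeries.C_injective) 5).mp inferInstance

lemma coeff_mul_congrK {N : ℕ} {A1 B1 A2 B2 : PowerSeries K}
    (hA : ∀ j ≤ N, PowerSeries.coeff (R := K) j A1 = PowerSeries.coeff (R := K) j A2)
    (hB : ∀ j ≤ N, PowerSeries.coeff (R := K) j B1 = PowerSeries.coeff (R := K) j B2) :
    PowerSeries.coeff (R := K) N (A1 * B1) = PowerSeries.coeff (R := K) N (A2 * B2) := by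
  rw [PowerSeries.coeff_mul, PowerSeries.coeff_mul]
  apply Finset.sum_congr rfl
  intro x hx
  rw [Finset.HasAntidiagonal.mem_antidiagonal] at hx
  rw [hA x.1 (by omega), hB x.2 (by omega)]

lemma coeff_pow_congrK {N : ℕ} {A1 A2 : PowerSeries K}
    (h : ∀ j ≤ N, PowerSeries.coeff (R := K) j A1 = PowerSeries.coeff (R := K) j A2) (e : ℕ) :
    ∀ j ≤ N, PowerSeries.coeff (R := K) j (A1^e) = PowerSeries.coeff (R := K) j (A2^e) := by
  induction e with
  | zero => intro j hj; rw [pow_zero, pow_zero]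
  | succ e ih =>
    intro j hj
    rw [pow_succ, pow_succ]
    exact coeff_mul_congrK (fun i hi => ih i (le_trans hi hj))
      (fun i hi => h i (le_trans hi hj))

lemma pow5_supp (g : PowerSeries K) (m : ℕ) (hm : m % 5 ≠ 0) :
    PowerSeries.coeff (R := K) m (g^5) = 0 := by
  set T : PowerSeries K :=
    ∑ i ∈ Finset.range (m+1), PowerSeries.C (R := K) (PowerSeries.coeff (R := K) i g) * (X:PowerSeries K)^i
    with hT
  have hTg : ∀ j ≤ m, PowerSeries.coeff (R := K) j g = PowerSeries.coeff (R := K) j T := by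
    intro j hj
    rw [hT, map_sum]
    rw [Finset.sum_eq_single j]
    · rw [PowerSeries.coeff_C_mul, PowerSeries.coeff_X_pow, if_pos rfl, mul_one]
    · intro b _ hb
      rw [PowerSeries.coeff_C_mul, PowerSeries.coeff_X_pow, if_neg (fun h => hb h.symm), mul_zero]
    · intro habs
      rw [Finset.mem_range] at habs
      omega
  rw [coeff_pow_congrK hTg 5 m (le_refl m)]
  have hfrob : T^5 = ∑ i ∈ Finset.range (m+1),
      PowerSeries.C (R := K) (PowerSeries.coeff (R := K) i g) * (X:PowerSeries K)^(i*5) := by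
    rw [hT, sum_pow_char]
    apply Finset.sum_congr rfl
    intro i _
    rw [mul_pow, ← map_pow, ZMod.pow_card, ← pow_mul]
  rw [hfrob, map_sum]
  apply Finset.sum_eq_zero
  intro i _
  rw [PowerSeries.coeff_C_mul, PowerSeries.coeff_X_pow, if_neg (by omega), mul_zero]

lemma inv_supp (φ : PowerSeries K) (h0 : PowerSeries.constantCoeff (R := K) φ ≠ 0)
    (hs : ∀ m, m % 5 ≠ 0 → PowerSeries.coeff (R := K) m φ = 0) :
    ∀ m, m % 5 ≠ 0 → PowerSeries.coeff (R := K) m φ⁻¹ = 0 := by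
  intro m
  induction m using Nat.strong_induction_on with
  | _ m ih =>
    intro hm
    rw [PowerSeries.coeff_inv, if_neg (by omega)]
    rw [Finset.sum_eq_zero, mul_zero]
    intro x hx
    rw [Finset.HasAntidiagonal.mem_antidiagonal] at hx
    by_cases h2 : x.2 < m
    · rw [if_pos h2]
      by_cases h5 : x.1 % 5 = 0
      · rw [ih x.2 h2 (by omega), mul_zero]
      · rw [hs x.1 h5, zero_mul]
    · rw [if_neg h2]

lemma mul_supp {A1 B1 : PowerSeries K}
    (hA : ∀ m, m % 5 ≠ 0 → PowerSeries.coeff (R := K) m A1 = 0)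
    (hB : ∀ m, m % 5 ≠ 0 → PowerSeries.coeff (R := K) m B1 = 0) :
    ∀ m, m % 5 ≠ 0 → PowerSeries.coeff (R := K) m (A1 * B1) = 0 := by
  intro m hm
  rw [PowerSeries.coeff_mul]
  apply Finset.sum_eq_zero
  intro x hx
  rw [Finset.HasAntidiagonal.mem_antidiagonal] at hx
  by_cases h5 : x.1 % 5 = 0
  · rw [hB x.2 (by omega), mul_zero]
  · rw [hA x.1 h5, zero_mul]

lemma Jres (x : ℕ) (hx : ¬(x % 5 = 0 ∨ x % 5 = 1)) :
    PowerSeries.coeff (R := K) x (PowerSeries.map (Int.castRingHom K) Jj) = 0 := by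
  rw [PowerSeries.coeff_map, Jj_coeff, map_sum]
  apply Finset.sum_eq_zero
  intro k _
  rw [apply_ite (Int.castRingHom K)]
  by_cases hc : 2*x = k*(k+1)
  · rw [if_pos hc]
    obtain ⟨q, r, hr5, rfl⟩ : ∃ q r, r < 5 ∧ k = 5*q + r :=
      ⟨k/5, k%5, by omega, by omega⟩
    interval_cases r
    · exfalso
      have h1 : (5*q)*((5*q)+1) = 5*(q*(5*q+1)) := by ring
      rw [Nat.add_zero] at hc
      rw [h1] at hc
      omega
    · exfalso
      have h1 : (5*q+1)*((5*q+1)+1) = 5*(5*q*q+3*q)+2 := by ring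
      rw [h1] at hc
      omega
    · -- r = 2 : coefficient divisible by 5
      have h1 : ((-1:ℤ))^(5*q+2) * (2*((5*q+2:ℕ):ℤ)+1)
          = ((-1:ℤ))^(5*q+2) * (5*(2*(q:ℤ)+1)) := by push_cast; ring
      rw [h1, map_mul]
      have h2 : (Int.castRingHom K) (5*(2*(q:ℤ)+1)) = 0 := by
        have : ((5*(2*(q:ℤ)+1) : ℤ) : K) = 0 :=
          (ZMod.intCast_zmod_eq_zero_iff_dvd _ 5).mpr ⟨2*(q:ℤ)+1, by push_cast; ring⟩
        exact this
      rw [h2, mul_zero]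
    · exfalso
      have h1 : (5*q+3)*((5*q+3)+1) = 5*(5*q*q+7*q+2)+2 := by ring
      rw [h1] at hc
      omega
    · exfalso
      have h1 : (5*q+4)*((5*q+4)+1) = 5*((5*q+4)*(q+1)) := by ring
      rw [h1] at hc
      omega
  · rw [if_neg hc, map_zero]

lemma J3_supp (b : ℕ) (hb : b % 5 = 4) :
    PowerSeries.coeff (R := K) b ((PowerSeries.map (Int.castRingHom K) Jj)
      * (PowerSeries.map (Int.castRingHom K) Jj)
      * (PowerSeries.map (Int.castRingHom K) Jj)) = 0 := by
  set Jb := PowerSeries.map (Int.castRingHom K) Jj with hJb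
  rw [PowerSeries.coeff_mul]
  apply Finset.sum_eq_zero
  intro x hx
  rw [Finset.HasAntidiagonal.mem_antidiagonal] at hx
  by_cases hx2 : x.2 % 5 = 0 ∨ x.2 % 5 = 1
  · rw [PowerSeries.coeff_mul, Finset.sum_mul]
    apply Finset.sum_eq_zero
    intro y hy
    rw [Finset.HasAntidiagonal.mem_antidiagonal] at hy
    by_cases hy1 : y.1 % 5 = 0 ∨ y.1 % 5 = 1
    · by_cases hy2 : y.2 % 5 = 0 ∨ y.2 % 5 = 1
      · omega
      · rw [Jres y.2 hy2, mul_zero, zero_mul]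
    · rw [Jres y.1 hy1, zero_mul, zero_mul]
  · rw [Jres x.2 hx2, mul_zero]

theorem stmt7' (t : ℕ) (ht : 0 < t) (f : ℕ → ℤ)
    (hf : PowerSeries.mk f * euler 1 = thetaSq (5 * t)) (n : ℕ) :
    (5 : ℤ) ∣ f (5 * n + 4) := by
  set Eb := PowerSeries.map (Int.castRingHom K) (euler 1) with hEb
  set Jb := PowerSeries.map (Int.castRingHom K) Jj with hJb
  set Gb := PowerSeries.map (Int.castRingHom K) Gg with hGb
  set Tb := PowerSeries.map (Int.castRingHom K) (thetaSq (5*t)) with hTb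
  set Fb := PowerSeries.map (Int.castRingHom K) (PowerSeries.mk f) with hFb
  have hid1 : Eb * Eb = Jb * Gb := by
    rw [hEb, hJb, hGb, ← map_mul, ← map_mul, identity1]
  have hid2 : Eb * Gb = 1 := by
    rw [hEb, hGb, ← map_mul, identity2, map_one]
  have hE3 : Eb*Eb*Eb = Jb := by
    calc Eb*Eb*Eb = (Jb*Gb)*Eb := by rw [← hid1]
    _ = Jb*(Eb*Gb) := by ring
    _ = Jb := by rw [hid2, mul_one]
  have hconst : PowerSeries.constantCoeff (R := K) Eb = 1 := by
    rw [hEb]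
    have h : PowerSeries.constantCoeff (R := K) (PowerSeries.map (Int.castRingHom K) (euler 1))
        = (Int.castRingHom K) (PowerSeries.constantCoeff (R := ℤ) (euler 1)) := by
      rw [← PowerSeries.coeff_zero_eq_constantCoeff_apply, PowerSeries.coeff_map,
        PowerSeries.coeff_zero_eq_constantCoeff_apply]
    rw [h, eul_const, map_one]
  set u5 := (Eb*Eb)^5 with hu5def
  have hu5 : PowerSeries.constantCoeff (R := K) u5 ≠ 0 := by
    rw [hu5def, map_pow, map_mul, hconst]
    norm_num
  have hP : u5 * u5⁻¹ = 1 := PowerSeries.mul_inv_cancel _ hu5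
  have hfK : Fb * Eb = Tb := by rw [hFb, hEb, hTb, ← map_mul, hf]
  have hFeq : Fb = (Tb * u5⁻¹) * (Jb*Jb*Jb) := by
    have h2 : (Tb * u5⁻¹) * (Jb*Jb*Jb) = Fb * (u5 * u5⁻¹) := by
      rw [← hfK, ← hE3, hu5def]
      ring
    rw [h2, hP, mul_one]
  have hT : ∀ m, m % 5 ≠ 0 → PowerSeries.coeff (R := K) m Tb = 0 := by
    intro m hm
    rw [hTb, PowerSeries.coeff_map, thetaSq, PowerSeries.coeff_mk, map_sum]
    apply Finset.sum_eq_zero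
    intro k _
    rw [apply_ite (Int.castRingHom K)]
    by_cases hc : m = 5*t*k^2
    · exfalso
      have h5 : m = 5*(t*k^2) := by rw [hc]; ring
      omega
    · rw [if_neg hc, map_zero]
  have hU : ∀ m, m % 5 ≠ 0 → PowerSeries.coeff (R := K) m (Tb * u5⁻¹) = 0 :=
    mul_supp hT (inv_supp u5 hu5 (fun m hm => pow5_supp (Eb*Eb) m hm))
  have hcoeff : PowerSeries.coeff (R := K) (5*n+4) Fb = 0 := by
    rw [hFeq, PowerSeries.coeff_mul]
    apply Finset.sum_eq_zero
    intro x hx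
    rw [Finset.HasAntidiagonal.mem_antidiagonal] at hx
    by_cases h5 : x.1 % 5 = 0
    · rw [hJb] at *
      rw [J3_supp x.2 (by omega), mul_zero]
    · rw [hU x.1 h5, zero_mul]
  have hfin : ((f (5*n+4) : ℤ) : K) = 0 := by
    rw [← hcoeff, hFb, PowerSeries.coeff_map, PowerSeries.coeff_mk]
    rfl
  have := (ZMod.intCast_zmod_eq_zero_iff_dvd (f (5*n+4)) 5).mp hfin
  exact_mod_cast this

end S7

/-- p_{10t,5t}(5n+4) ≡ 0 (mod 5) for all t ≥ 1, n ≥ 0. -/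
theorem stmt7 (t : ℕ) (ht : 0 < t) (f : ℕ → ℤ)
    (hf : PowerSeries.mk f * euler 1 = thetaSq (5 * t)) (n : ℕ) :
    (5 : ℤ) ∣ f (5 * n + 4) := S7.stmt7' t ht f hf n
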